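/- Every interval graph admits an umbrella-free vertex ordering: if a finite simple graph G admits an interval representation, then there is a linear order ≺ on the vertices of G (e.g., by nondecreasing right endpoints of the intervals) such that for all vertices v1 ≺ v2 ≺ v3, if v1 is adjacent to v3 in G, then v2 is adjacent to v3 in G. -/

import Mathlib

/-- A simple graph `G` is an interval graph if each vertex can be assigned a nonempty
closed real interval `[a v, b v]` such that two distinct vertices are adjacent
iff their intervals intersect. -/
def IsIntervalGraph {V : Type*} (G : SimpleGraph V) : Prop :=
  ∃ a b : V → ℝ, (∀ v, a v ≤ b v) ∧
    ∀ u v : V, u ≠ v →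
      (G.Adj u v ↔ (Set.Icc (a u) (b u) ∩ Set.Icc (a v) (b v)).Nonempty)

/-- Every interval graph admits an umbrella-free vertex ordering: there is a strict
linear order `≺` on the vertices such that whenever `v1 ≺ v2 ≺ v3` and `v1` is
adjacent to `v3`, also `v2` is adjacent to `v3`. -/
theorem interval_graph_umbrella_free_order {V : Type*} [Fintype V] (G : SimpleGraph V)
    (hG : IsIntervalGraph G) :
    ∃ r : V → V → Prop, IsStrictTotalOrder V r ∧
      ∀ v1 v2 v3 : V, r v1 v2 → r v2 v3 → G.Adj v1 v3 → G.Adj v2 v3 := by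
  classical
  obtain ⟨a, b, hab, hadj⟩ := hG
  let e := Fintype.equivFin V
  set r : V → V → Prop := fun u v => b u < b v ∨ (b u = b v ∧ e u < e v) with hr
  have hirr : ∀ v, ¬ r v v := by
    intro v h
    rcases h with h | ⟨_, h⟩ <;> exact lt_irrefl _ h
  have htrans : ∀ u v w, r u v → r v w → r u w := by
    intro u v w huv hvw
    rcases huv with h1 | ⟨h1, h1'⟩ <;> rcases hvw with h2 | ⟨h2, h2'⟩
    · exact Or.inl (h1.trans h2)
    · exact Or.inl (h2 ▸ h1)
    · exact Or.inl (h1 ▸ h2)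
    · exact Or.inr ⟨h1.trans h2, h1'.trans h2'⟩
  have htri : ∀ u v, r u v ∨ u = v ∨ r v u := by
    intro u v
    rcases lt_trichotomy (b u) (b v) with h | h | h
    · exact Or.inl (Or.inl h)
    · rcases lt_trichotomy (e u) (e v) with h' | h' | h'
      · exact Or.inl (Or.inr ⟨h, h'⟩)
      · exact Or.inr (Or.inl (e.injective (by exact_mod_cast h')))
      · exact Or.inr (Or.inr (Or.inr ⟨h.symm, h'⟩))
    · exact Or.inr (Or.inr (Or.inl h))
  refine ⟨r, { trichotomous := fun u v h1 h2 => by rcases htri u v with h | h | h; exacts [absurd h h1, h, absurd h h2], irrefl := hirr, trans := htrans }, ?_⟩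
  intro v1 v2 v3 h12 h23 hadj13
  have hb12 : b v1 ≤ b v2 := by rcases h12 with h | ⟨h, _⟩; exact h.le; exact h.le
  have hb23 : b v2 ≤ b v3 := by rcases h23 with h | ⟨h, _⟩; exact h.le; exact h.le
  have hne23 : v2 ≠ v3 := fun h => hirr v2 (h ▸ h23)
  have hne13 : v1 ≠ v3 := G.ne_of_adj hadj13
  obtain ⟨x, ⟨hx1, hx1'⟩, hx3, hx3'⟩ := (hadj v1 v3 hne13).mp hadj13
  refine (hadj v2 v3 hne23).mpr ⟨max (a v2) (a v3), ⟨le_max_left _ _, ?_⟩,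
    le_max_right _ _, ?_⟩
  · exact max_le (hab v2) (hx3.trans (hx1'.trans hb12))
  · exact max_le ((hab v2).trans hb23) (hab v3)
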